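/- Let s solve min_{‖s‖ ≤ δ} (gᵀs + (1/2)sᵀHs) with g ≠ 0 and δ > 0. Then ‖s‖ ≥ min{δ, ‖g‖/‖H‖} > 0. -/

import Mathlib

open scoped RealInnerProductSpace

set_option maxHeartbeats 1000000

/-- If `s` minimizes `q(s) = gᵀs + (1/2)sᵀHs` over the ball of radius `δ` with
`g ≠ 0`, then `‖s‖ ≥ min{δ, ‖g‖/‖H‖} > 0`. -/
theorem stmt12 {n : ℕ} (δ : ℝ) (hδ : 0 < δ)
    (g s : EuclideanSpace ℝ (Fin n)) (hg : g ≠ 0)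
    (H : EuclideanSpace ℝ (Fin n) →L[ℝ] EuclideanSpace ℝ (Fin n))
    (hsa : IsSelfAdjoint H) (hHpos : 0 < ‖H‖)
    (q : EuclideanSpace ℝ (Fin n) → ℝ)
    (hq : ∀ v, q v = ⟪g, v⟫ + (1/2) * ⟪v, H v⟫)
    (hball : s ∈ Metric.closedBall (0 : EuclideanSpace ℝ (Fin n)) δ)
    (hmin : IsMinOn q (Metric.closedBall (0 : EuclideanSpace ℝ (Fin n)) δ) s) :
    min δ (‖g‖ / ‖H‖) ≤ ‖s‖ ∧ 0 < min δ (‖g‖ / ‖H‖) := by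
  have hgpos : 0 < ‖g‖ := norm_pos_iff.mpr hg
  have hpos : 0 < min δ (‖g‖ / ‖H‖) := lt_min hδ (div_pos hgpos hHpos)
  refine ⟨?_, hpos⟩
  rcases eq_or_lt_of_le (by simpa [mem_closedBall_zero_iff] using hball : ‖s‖ ≤ δ) with heq | hlt
  · rw [heq]; exact min_le_left _ _
  · -- interior case: show g + H s = 0
    set w := g + H s with hw
    have hw0 : w = 0 := by
      by_contra hw0
      have hwn : 0 < ‖w‖ := norm_pos_iff.mpr hw0
      set ε : ℝ := min ((δ - ‖s‖) / ‖w‖) (1 / ‖H‖) with hε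
      have hε0 : 0 < ε := lt_min (div_pos (by linarith) hwn) (div_pos one_pos hHpos)
      have hmem : s - ε • w ∈ Metric.closedBall (0 : EuclideanSpace ℝ (Fin n)) δ := by
        rw [mem_closedBall_zero_iff]
        calc ‖s - ε • w‖ ≤ ‖s‖ + ‖ε • w‖ := norm_sub_le _ _
          _ = ‖s‖ + ε * ‖w‖ := by rw [norm_smul, Real.norm_of_nonneg hε0.le]
          _ ≤ ‖s‖ + ((δ - ‖s‖) / ‖w‖) * ‖w‖ := by
              gcongr; exact min_le_left _ _
          _ = δ := by field_simp; ring
      have hsym : ∀ x y : EuclideanSpace ℝ (Fin n), ⟪H x, y⟫ = ⟪x, H y⟫ :=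
        fun x y => hsa.isSymmetric x y
      have hqeq : q (s - ε • w) = q s - ε * ⟪w, w⟫ + (ε^2 / 2) * ⟪w, H w⟫ := by
        simp only [hq, hw, map_sub, map_smul, map_add, inner_sub_left, inner_sub_right,
          inner_add_left, inner_add_right, real_inner_smul_left, real_inner_smul_right]
        have h1 := hsym s g
        have h2 := hsym s (H s)
        have h3 := hsym w g
        have h4 := hsym w (H s)
        have h5 := hsym s w
        simp only [hw, map_add, inner_add_left, inner_add_right] at h1 h2 h3 h4 h5 ⊢
        ring_nf
        nlinarith [real_inner_comm g s, real_inner_comm g (H s), real_inner_comm (H s) s]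
      have hHw : ⟪w, H w⟫ ≤ ‖H‖ * ‖w‖^2 := by
        calc ⟪w, H w⟫ ≤ ‖w‖ * ‖H w‖ := real_inner_le_norm _ _
          _ ≤ ‖w‖ * (‖H‖ * ‖w‖) := by gcongr; exact H.le_opNorm w
          _ = ‖H‖ * ‖w‖^2 := by ring
      have hεH : ε * ‖H‖ ≤ 1 := by
        have : ε ≤ 1 / ‖H‖ := min_le_right _ _
        calc ε * ‖H‖ ≤ (1 / ‖H‖) * ‖H‖ := by gcongr
          _ = 1 := one_div_mul_cancel (ne_of_gt hHpos)
      have hlt2 : q (s - ε • w) < q s := by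
        rw [hqeq, real_inner_self_eq_norm_sq]
        have : (ε^2 / 2) * ⟪w, H w⟫ ≤ (ε / 2) * ‖w‖^2 := by
          calc (ε^2 / 2) * ⟪w, H w⟫ ≤ (ε^2 / 2) * (‖H‖ * ‖w‖^2) := by
                apply mul_le_mul_of_nonneg_left hHw; positivity
            _ ≤ (ε / 2) * ‖w‖^2 := by nlinarith [mul_le_mul_of_nonneg_right hεH (mul_nonneg hε0.le (sq_nonneg ‖w‖))]
        nlinarith [sq_nonneg ‖w‖, mul_pos hε0 (mul_pos hwn hwn)]
      exact absurd (hmin hmem) (not_le.mpr hlt2)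
    -- from g + H s = 0
    have hgeq : g = -(H s) := by
      have := hw0
      rw [hw, add_eq_zero_iff_eq_neg] at this
      exact this
    have : ‖g‖ ≤ ‖H‖ * ‖s‖ := by
      rw [hgeq, norm_neg]; exact H.le_opNorm s
    have h2 : ‖g‖ / ‖H‖ ≤ ‖s‖ := (div_le_iff₀ hHpos).mpr (by linarith [this])
    exact le_trans (min_le_right _ _) h2
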